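/- Let $n \ge 3$ and let $R$ be the commutative ring generated over $\mathbb{Z}$ by symbols $\Delta_{i,j}$ for $1 \le i < j \le n$ (with $\Delta_{j,i} := \Delta_{i,j}$), modulo the square relations $\Delta_{i,j} + \Delta_{k,l} = \Delta_{i,k} + \Delta_{j,l}$ for distinct $i,j,k,l$ and the diagonal relations $\Delta_{i,j}\Delta_{i,k} = \Delta_{i,j}\Delta_{j,k}$ for distinct $i,j,k$. For a partition $P$ of $[n]$, and any forest $T$ on vertex set $[n]$ consisting of one spanning tree for each part of $P$, define $\Delta_P = \prod_{\{i,j\} \in \mathrm{Edge}(T)} \Delta_{i,j}$. Then $\Delta_P$ is independent of the choice of the forest $T$. -/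

import Mathlib

open MvPolynomial

/-- The relations defining the ring `R`: symmetry `Δ_{i,j} = Δ_{j,i}`, the square
relations `Δ_{i,j}+Δ_{k,l} = Δ_{i,k}+Δ_{j,l}` for distinct `i,j,k,l`, and the diagonal
relations `Δ_{i,j}Δ_{i,k} = Δ_{i,j}Δ_{j,k}` for distinct `i,j,k`. -/
def deltaRels (n : ℕ) : Set (MvPolynomial (Fin n × Fin n) ℤ) :=
  {x | ∃ i j : Fin n, x = X (i, j) - X (j, i)} ∪
  {x | ∃ i j k l : Fin n, i ≠ j ∧ i ≠ k ∧ i ≠ l ∧ j ≠ k ∧ j ≠ l ∧ k ≠ l ∧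
    x = X (i, j) + X (k, l) - X (i, k) - X (j, l)} ∪
  {x | ∃ i j k : Fin n, i ≠ j ∧ i ≠ k ∧ j ≠ k ∧
    x = X (i, j) * X (i, k) - X (i, j) * X (j, k)}

/-- The ring `R(n)` generated by the `Δ_{i,j}` modulo the square and diagonal
relations. -/
abbrev DeltaRing (n : ℕ) :=
  MvPolynomial (Fin n × Fin n) ℤ ⧸ Ideal.span (deltaRels n)

/-- The class `Δ_{i,j} ∈ R(n)`. -/
noncomputable def delta {n : ℕ} (i j : Fin n) : DeltaRing n :=
  Ideal.Quotient.mk _ (X (i, j))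

/-- `P` is a partition of `Fin n` (into nonempty parts covering everything). -/
def IsPartitionOf (n : ℕ) (P : Finset (Finset (Fin n))) : Prop :=
  (∀ A ∈ P, A.Nonempty) ∧ (∀ x : Fin n, ∃! A, A ∈ P ∧ x ∈ A)

/-- `E` is (the edge set of) a forest on vertex set `Fin n` consisting of one spanning
tree for each part of the partition `P`: the edges are loop-free and pairwise distinct
as unordered pairs, the resulting graph is acyclic, and two vertices are connected in it
exactly when they lie in a common part of `P`. -/
def IsSpanningForestFor {n : ℕ} (P : Finset (Finset (Fin n)))
    (E : Finset (Fin n × Fin n)) : Prop :=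
  (∀ p ∈ E, p.1 ≠ p.2) ∧
  (∀ p ∈ E, ∀ q ∈ E, (s(p.1, p.2) : Sym2 (Fin n)) = s(q.1, q.2) → p = q) ∧
  (SimpleGraph.fromEdgeSet {e : Sym2 (Fin n) | ∃ p ∈ E, e = s(p.1, p.2)}).IsAcyclic ∧
  (∀ i j : Fin n,
    (SimpleGraph.fromEdgeSet {e : Sym2 (Fin n) | ∃ p ∈ E, e = s(p.1, p.2)}).Reachable i j
      ↔ ∃ A ∈ P, i ∈ A ∧ j ∈ A)


namespace Stmt14

open SimpleGraph Finset
open scoped Classical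

variable {n : ℕ}

lemma delta_comm (i j : Fin n) : delta i j = delta j i := by
  unfold delta
  rw [Ideal.Quotient.eq]
  exact Ideal.subset_span (Or.inl (Or.inl ⟨i, j, rfl⟩))

lemma delta_slide {i j k : Fin n} (hij : i ≠ j) (hik : i ≠ k) (hjk : j ≠ k) :
    delta i j * delta i k = delta i j * delta j k := by
  unfold delta
  rw [← map_mul, ← map_mul, Ideal.Quotient.eq]
  exact Ideal.subset_span (Or.inr ⟨i, j, k, hij, hik, hjk, rfl⟩)

lemma slideProd (s : Finset (Fin n)) {b c : Fin n} (hbc : b ≠ c) (hb : b ∉ s) (hc : c ∉ s) :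
    delta b c * ∏ w ∈ s, delta b w = delta b c * ∏ w ∈ s, delta c w := by
  induction s using Finset.induction with
  | empty => simp
  | @insert a s ha ih =>
    have hba : b ≠ a := fun h => hb (h ▸ Finset.mem_insert_self a s)
    have hca : c ≠ a := fun h => hc (h ▸ Finset.mem_insert_self a s)
    have hb' : b ∉ s := fun h => hb (Finset.mem_insert_of_mem h)
    have hc' : c ∉ s := fun h => hc (Finset.mem_insert_of_mem h)
    rw [Finset.prod_insert ha, Finset.prod_insert ha]
    calc delta b c * (delta b a * ∏ w ∈ s, delta b w)
        = delta b a * (delta b c * ∏ w ∈ s, delta b w) := by ring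
      _ = delta b a * (delta b c * ∏ w ∈ s, delta c w) := by rw [ih hb' hc']
      _ = (delta b c * delta b a) * ∏ w ∈ s, delta c w := by ring
      _ = (delta b c * delta c a) * ∏ w ∈ s, delta c w := by rw [delta_slide hbc hba hca]
      _ = delta b c * (delta c a * ∏ w ∈ s, delta c w) := by ring

noncomputable def star (C : Finset (Fin n)) (c : Fin n) : DeltaRing n :=
  ∏ w ∈ C.erase c, delta c w

lemma reroot {C : Finset (Fin n)} {b c : Fin n} (hb : b ∈ C) (hc : c ∈ C) :
    star C b = star C c := by
  rcases eq_or_ne b c with rfl | hbc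
  · rfl
  have hcb : c ∈ C.erase b := Finset.mem_erase.2 ⟨Ne.symm hbc, hc⟩
  have hbc' : b ∈ C.erase c := Finset.mem_erase.2 ⟨hbc, hb⟩
  have hkey : (C.erase b).erase c = (C.erase c).erase b := Finset.erase_right_comm
  calc star C b = delta b c * ∏ w ∈ (C.erase b).erase c, delta b w :=
        (Finset.mul_prod_erase _ _ hcb).symm
    _ = delta b c * ∏ w ∈ (C.erase b).erase c, delta c w := by
        refine slideProd _ hbc ?_ ?_
        · exact fun h => (Finset.mem_erase.1 (Finset.mem_of_mem_erase (by exact Finset.mem_erase.2 (Finset.mem_erase.1 h)) )).1 rfl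
        · exact Finset.notMem_erase _ _
    _ = delta c b * ∏ w ∈ (C.erase c).erase b, delta c w := by rw [delta_comm, hkey]
    _ = star C c := Finset.mul_prod_erase _ _ hbc'

lemma glue {A B : Finset (Fin n)} {u v : Fin n} (hu : u ∈ A) (hv : v ∈ B)
    (hd : Disjoint A B) : delta u v * star A u * star B v = star (A ∪ B) u := by
  have huv : u ≠ v := fun h => (Finset.disjoint_left.1 hd hu) (h ▸ hv)
  have hunB : u ∉ B := Finset.disjoint_left.1 hd hu
  have h1 : delta u v * star B v = ∏ w ∈ B, delta u w := by
    have hvs : v ∉ B.erase v := Finset.notMem_erase _ _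
    have hus : u ∉ B.erase v := fun h => hunB (Finset.mem_of_mem_erase h)
    calc delta u v * star B v = delta v u * ∏ w ∈ B.erase v, delta v w := by
          rw [delta_comm]; rfl
      _ = delta v u * ∏ w ∈ B.erase v, delta u w := slideProd _ (Ne.symm huv) hvs hus
      _ = delta u v * ∏ w ∈ B.erase v, delta u w := by rw [delta_comm]
      _ = ∏ w ∈ B, delta u w := Finset.mul_prod_erase _ _ hv
  have h2 : (A ∪ B).erase u = A.erase u ∪ B := by
    rw [Finset.erase_union_distrib, Finset.erase_eq_of_notMem hunB]
  calc delta u v * star A u * star B v = star A u * (delta u v * star B v) := by ring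
    _ = (∏ w ∈ A.erase u, delta u w) * ∏ w ∈ B, delta u w := by rw [h1]; rfl
    _ = ∏ w ∈ A.erase u ∪ B, delta u w := by
        rw [Finset.prod_union (Finset.disjoint_of_subset_left (Finset.erase_subset _ _) hd)]
    _ = star (A ∪ B) u := by rw [star, h2]


noncomputable def comp (G : SimpleGraph (Fin n)) (v : Fin n) : Finset (Fin n) :=
  Finset.univ.filter (fun u => G.Reachable u v)

lemma mem_comp {G : SimpleGraph (Fin n)} {u v : Fin n} :
    u ∈ comp G v ↔ G.Reachable u v := by simp [comp]

lemma self_mem_comp {G : SimpleGraph (Fin n)} (v : Fin n) : v ∈ comp G v :=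
  mem_comp.2 (Reachable.refl v)

noncomputable def mc (G : SimpleGraph (Fin n)) (v : Fin n) : Fin n :=
  (comp G v).min' ⟨v, self_mem_comp v⟩

lemma mc_congr {G H : SimpleGraph (Fin n)} {v w : Fin n} (h : comp G v = comp H w) :
    mc G v = mc H w := by
  unfold mc
  congr 1

noncomputable def canon (G : SimpleGraph (Fin n)) : DeltaRing n :=
  ∏ w ∈ Finset.univ, if mc G w ≠ w then delta (mc G w) w else 1

lemma canon_congr {G H : SimpleGraph (Fin n)}
    (h : ∀ a b : Fin n, G.Reachable a b ↔ H.Reachable a b) : canon G = canon H := by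
  have hcomp : ∀ v, comp G v = comp H v := by
    intro v; ext u; simp [mem_comp, h]
  have hmc : ∀ v, mc G v = mc H v := fun v => mc_congr (hcomp v)
  unfold canon
  exact Finset.prod_congr rfl (fun w _ => by rw [hmc w])

lemma canon_bot : canon (⊥ : SimpleGraph (Fin n)) = 1 := by
  have : ∀ v : Fin n, mc (⊥ : SimpleGraph (Fin n)) v = v := by
    intro v
    have : comp (⊥ : SimpleGraph (Fin n)) v = {v} := by
      ext u; simp [mem_comp, reachable_bot]
    rw [mc]
    simp only [this]
    exact Finset.min'_singleton v
  unfold canon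
  exact Finset.prod_eq_one (fun w _ => by simp [this w])

lemma merge {G G' : SimpleGraph (Fin n)} {u v : Fin n}
    (huv : ¬ G'.Reachable u v)
    (h : ∀ a b : Fin n, G.Reachable a b ↔ G'.Reachable a b ∨
      (G'.Reachable a u ∧ G'.Reachable v b) ∨ (G'.Reachable a v ∧ G'.Reachable u b)) :
    canon G = delta u v * canon G' := by
  set A := comp G' u with hA
  set B := comp G' v with hB
  have huA : u ∈ A := self_mem_comp u
  have hvB : v ∈ B := self_mem_comp v
  have hd : Disjoint A B := by
    rw [Finset.disjoint_left]
    intro x hx hx'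
    exact huv ((mem_comp.1 hx).symm.trans (mem_comp.1 hx'))
  set C := A ∪ B with hC
  -- components
  have hcompA : ∀ w ∈ A, comp G' w = A := by
    intro w hw; ext x
    simp only [mem_comp, hA]
    exact ⟨fun hx => hx.trans (mem_comp.1 hw), fun hx => hx.trans (mem_comp.1 hw).symm⟩
  have hcompB : ∀ w ∈ B, comp G' w = B := by
    intro w hw; ext x
    simp only [mem_comp, hB]
    exact ⟨fun hx => hx.trans (mem_comp.1 hw), fun hx => hx.trans (mem_comp.1 hw).symm⟩
  have hF1 : ∀ w ∈ C, comp G w = C := by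
    intro w hw
    ext x
    simp only [mem_comp, hC, Finset.mem_union]
    rcases Finset.mem_union.1 hw with hwA | hwB
    · have hwu : G'.Reachable w u := mem_comp.1 hwA
      constructor
      · intro hx
        rcases (h x w).1 hx with h1 | ⟨h1, h2⟩ | ⟨h1, h2⟩
        · exact Or.inl (mem_comp.2 (h1.trans hwu))
        · exact Or.inl (mem_comp.2 h1)
        · exact Or.inr (mem_comp.2 h1)
      · rintro (hx | hx)
        · exact (h x w).2 (Or.inl ((mem_comp.1 hx).trans hwu.symm))
        · exact (h x w).2 (Or.inr (Or.inr ⟨mem_comp.1 hx, hwu.symm⟩))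
    · have hwv : G'.Reachable w v := mem_comp.1 hwB
      constructor
      · intro hx
        rcases (h x w).1 hx with h1 | ⟨h1, h2⟩ | ⟨h1, h2⟩
        · exact Or.inr (mem_comp.2 (h1.trans hwv))
        · exact Or.inl (mem_comp.2 h1)
        · exact Or.inr (mem_comp.2 h1)
      · rintro (hx | hx)
        · exact (h x w).2 (Or.inr (Or.inl ⟨mem_comp.1 hx, hwv.symm⟩))
        · exact (h x w).2 (Or.inl ((mem_comp.1 hx).trans hwv.symm))
  have hF2 : ∀ w, w ∉ C → comp G w = comp G' w := by
    intro w hw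
    have hwu : ¬ G'.Reachable w u := fun hr => hw (Finset.mem_union_left _ (mem_comp.2 hr))
    have hwv : ¬ G'.Reachable w v := fun hr => hw (Finset.mem_union_right _ (mem_comp.2 hr))
    ext x
    simp only [mem_comp]
    constructor
    · intro hx
      rcases (h x w).1 hx with h1 | ⟨h1, h2⟩ | ⟨h1, h2⟩
      · exact h1
      · exact absurd h2.symm hwv
      · exact absurd h2.symm hwu
    · intro hx; exact (h x w).2 (Or.inl hx)
  -- min elements
  have hCne : C.Nonempty := ⟨u, Finset.mem_union_left _ huA⟩
  set m := C.min' hCne with hm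
  set a := A.min' ⟨u, huA⟩ with ha
  set b := B.min' ⟨v, hvB⟩ with hb
  have hmC : m ∈ C := Finset.min'_mem _ _
  have haA : a ∈ A := Finset.min'_mem _ _
  have hbB : b ∈ B := Finset.min'_mem _ _
  have hmcC : ∀ w ∈ C, mc G w = m := by
    intro w hw
    rw [mc]
    have := hF1 w hw
    simp only [this]; rfl
  have hmcA : ∀ w ∈ A, mc G' w = a := by
    intro w hw; rw [mc]; have := hcompA w hw; simp only [this]; rfl
  have hmcB : ∀ w ∈ B, mc G' w = b := by
    intro w hw; rw [mc]; have := hcompB w hw; simp only [this]; rfl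
  have hmcOut : ∀ w, w ∉ C → mc G w = mc G' w := fun w hw => mc_congr (hF2 w hw)
  -- split the products
  have splitG : canon G = (∏ w ∈ C, if mc G w ≠ w then delta (mc G w) w else 1)
      * ∏ w ∈ Cᶜ, if mc G w ≠ w then delta (mc G w) w else 1 := by
    rw [canon, Finset.prod_mul_prod_compl]
  have splitG' : canon G' = (∏ w ∈ C, if mc G' w ≠ w then delta (mc G' w) w else 1)
      * ∏ w ∈ Cᶜ, if mc G' w ≠ w then delta (mc G' w) w else 1 := by
    rw [canon, Finset.prod_mul_prod_compl]
  have hout : (∏ w ∈ Cᶜ, if mc G w ≠ w then delta (mc G w) w else 1)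
      = ∏ w ∈ Cᶜ, if mc G' w ≠ w then delta (mc G' w) w else 1 := by
    refine Finset.prod_congr rfl (fun w hw => ?_)
    rw [hmcOut w (by simpa using hw)]
  have prodStar : ∀ (D : Finset (Fin n)) (d : Fin n) (hd : d ∈ D) (f : Fin n → Fin n),
      (∀ w ∈ D, f w = d) →
      (∏ w ∈ D, if f w ≠ w then delta (f w) w else 1) = star D d := by
    intro D d hdD f hf
    rw [← Finset.mul_prod_erase _ _ hdD]
    have h1 : (if f d ≠ d then delta (f d) d else 1) = 1 := by simp [hf d hdD]
    rw [h1, one_mul, star]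
    refine Finset.prod_congr rfl (fun w hw => ?_)
    have hwD := Finset.mem_of_mem_erase hw
    have hne : d ≠ w := fun h => (Finset.mem_erase.1 hw).1 h.symm
    rw [hf w hwD, if_pos hne]
  have hprodC : (∏ w ∈ C, if mc G w ≠ w then delta (mc G w) w else 1) = star C m :=
    prodStar C m hmC _ hmcC
  have hprodC' : (∏ w ∈ C, if mc G' w ≠ w then delta (mc G' w) w else 1)
      = star A a * star B b := by
    rw [hC, Finset.prod_union hd]
    rw [prodStar A a haA _ hmcA, prodStar B b hbB _ hmcB]
  -- star identity
  have hstar : star C m = delta u v * (star A a * star B b) := by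
    rw [reroot haA huA, reroot hbB hvB, ← mul_assoc, glue huA hvB hd,
      reroot (Finset.mem_union_left _ huA) hmC]
  rw [splitG, splitG', hprodC, hprodC', hout, hstar]
  ring


def graphOf (E : Finset (Fin n × Fin n)) : SimpleGraph (Fin n) :=
  SimpleGraph.fromEdgeSet {e : Sym2 (Fin n) | ∃ p ∈ E, e = s(p.1, p.2)}

lemma isAcyclic_mono {G H : SimpleGraph (Fin n)} (hle : G ≤ H) (hH : H.IsAcyclic) :
    G.IsAcyclic := fun _v c hc => hH (c.mapLe hle) (hc.mapLe hle)

lemma reach_decomp {G G' : SimpleGraph (Fin n)} {u v : Fin n} (huv : u ≠ v)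
    (hadj : ∀ x y : Fin n, G.Adj x y ↔ G'.Adj x y ∨ (x = u ∧ y = v) ∨ (x = v ∧ y = u))
    (hnr : ¬ G'.Reachable u v) (a b : Fin n) :
    G.Reachable a b ↔ G'.Reachable a b ∨
      (G'.Reachable a u ∧ G'.Reachable v b) ∨ (G'.Reachable a v ∧ G'.Reachable u b) := by
  have hle : G' ≤ G := fun x y hxy => (hadj x y).2 (Or.inl hxy)
  have hGuv : G.Adj u v := (hadj u v).2 (Or.inr (Or.inl ⟨rfl, rfl⟩))
  constructor
  · intro hr
    obtain ⟨w⟩ := hr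
    induction w with
    | nil => exact Or.inl (Reachable.refl _)
    | @cons x y z hxy p ih =>
      rcases (hadj x y).1 hxy with h1 | ⟨rfl, rfl⟩ | ⟨rfl, rfl⟩
      · rcases ih with h2 | ⟨h2, h3⟩ | ⟨h2, h3⟩
        · exact Or.inl (h1.reachable.trans h2)
        · exact Or.inr (Or.inl ⟨h1.reachable.trans h2, h3⟩)
        · exact Or.inr (Or.inr ⟨h1.reachable.trans h2, h3⟩)
      · rcases ih with h2 | ⟨h2, h3⟩ | ⟨h2, h3⟩
        · exact Or.inr (Or.inl ⟨Reachable.refl _, h2⟩)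
        · exact absurd h2.symm hnr
        · exact Or.inl h3
      · rcases ih with h2 | ⟨h2, h3⟩ | ⟨h2, h3⟩
        · exact Or.inr (Or.inr ⟨Reachable.refl _, h2⟩)
        · exact Or.inl h3
        · exact absurd h2 hnr
  · rintro (h1 | ⟨h1, h2⟩ | ⟨h1, h2⟩)
    · exact h1.mono hle
    · exact ((h1.mono hle).trans hGuv.reachable).trans (h2.mono hle)
    · exact ((h1.mono hle).trans hGuv.symm.reachable).trans (h2.mono hle)

lemma main (E : Finset (Fin n × Fin n)) :
    (∀ p ∈ E, p.1 ≠ p.2) →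
    (∀ p ∈ E, ∀ q ∈ E, (s(p.1, p.2) : Sym2 (Fin n)) = s(q.1, q.2) → p = q) →
    (graphOf E).IsAcyclic →
    ∏ p ∈ E, delta p.1 p.2 = canon (graphOf E) := by
  induction E using Finset.strongInduction with
  | _ E ih =>
    intro h1 h2 h3
    rcases E.eq_empty_or_nonempty with rfl | ⟨p₀, hp₀⟩
    · have hbot : graphOf (∅ : Finset (Fin n × Fin n)) = (⊥ : SimpleGraph (Fin n)) := by
        rw [graphOf]
        convert SimpleGraph.fromEdgeSet_empty
        simp
      rw [hbot, canon_bot, Finset.prod_empty]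
    · obtain ⟨u, v⟩ := p₀
      have huv : u ≠ v := h1 (u, v) hp₀
      set E' := E.erase (u, v) with hE'
      have hsub : E' ⊂ E := Finset.erase_ssubset hp₀
      have h1' : ∀ p ∈ E', p.1 ≠ p.2 := fun p hp => h1 p (Finset.mem_of_mem_erase hp)
      have h2' : ∀ p ∈ E', ∀ q ∈ E', (s(p.1, p.2) : Sym2 (Fin n)) = s(q.1, q.2) → p = q :=
        fun p hp q hq => h2 p (Finset.mem_of_mem_erase hp) q (Finset.mem_of_mem_erase hq)
      have hle : graphOf E' ≤ graphOf E := by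
        intro x y hxy
        rw [graphOf, SimpleGraph.fromEdgeSet_adj] at hxy ⊢
        obtain ⟨⟨p, hp, hpe⟩, hne⟩ := hxy
        exact ⟨⟨p, Finset.mem_of_mem_erase hp, hpe⟩, hne⟩
      have h3' : (graphOf E').IsAcyclic := isAcyclic_mono hle h3
      -- edge distinct from E' edges
      have hedge_ne : ∀ q ∈ E', (s(q.1, q.2) : Sym2 (Fin n)) ≠ s(u, v) := by
        intro q hq heq
        have := h2 q (Finset.mem_of_mem_erase hq) (u, v) hp₀ heq
        exact (Finset.mem_erase.1 hq).1 this
      -- adjacency decomposition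
      have hadj : ∀ x y : Fin n, (graphOf E).Adj x y ↔ (graphOf E').Adj x y ∨
          (x = u ∧ y = v) ∨ (x = v ∧ y = u) := by
        intro x y
        simp only [graphOf, SimpleGraph.fromEdgeSet_adj, Set.mem_setOf_eq]
        constructor
        · rintro ⟨⟨p, hp, hpe⟩, hne⟩
          rcases eq_or_ne p (u, v) with rfl | hpne
          · rcases Sym2.eq_iff.1 hpe with ⟨rfl, rfl⟩ | ⟨rfl, rfl⟩
            · exact Or.inr (Or.inl ⟨rfl, rfl⟩)
            · exact Or.inr (Or.inr ⟨rfl, rfl⟩)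
          · exact Or.inl ⟨⟨p, Finset.mem_erase.2 ⟨hpne, hp⟩, hpe⟩, hne⟩
        · rintro (⟨⟨p, hp, hpe⟩, hne⟩ | ⟨hx, hy⟩ | ⟨hx, hy⟩)
          · exact ⟨⟨p, Finset.mem_of_mem_erase hp, hpe⟩, hne⟩
          · exact ⟨⟨(u, v), hp₀, by rw [hx, hy]⟩, by rw [hx, hy]; exact huv⟩
          · exact ⟨⟨(u, v), hp₀, by rw [hx, hy]; exact Sym2.eq_swap⟩, by rw [hx, hy]; exact huv.symm⟩
      -- bridge: u, v not reachable in E'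
      have hnr : ¬ (graphOf E').Reachable u v := by
        have hbridge := (SimpleGraph.isAcyclic_iff_forall_edge_isBridge.1 h3)
          (e := s(u, v)) (by
            rw [SimpleGraph.mem_edgeSet]
            exact (hadj u v).2 (Or.inr (Or.inl ⟨rfl, rfl⟩)))
        rw [SimpleGraph.isBridge_iff] at hbridge
        intro hr
        refine hbridge (hr.mono ?_)
        intro x y hxy
        rw [SimpleGraph.deleteEdges, SimpleGraph.sdiff_adj]
        refine ⟨hle hxy, ?_⟩
        rw [SimpleGraph.fromEdgeSet_adj]
        rintro ⟨hmem, -⟩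
        rw [graphOf, SimpleGraph.fromEdgeSet_adj] at hxy
        obtain ⟨⟨p, hp, hpe⟩, -⟩ := hxy
        rw [Set.mem_singleton_iff] at hmem
        exact hedge_ne p hp (hpe ▸ hmem)
      have hdecomp := reach_decomp huv hadj hnr
      have hprod : ∏ p ∈ E, delta p.1 p.2 = delta u v * ∏ p ∈ E', delta p.1 p.2 :=
        (Finset.mul_prod_erase _ _ hp₀).symm
      rw [hprod, ih E' hsub h1' h2' h3', merge hnr hdecomp]


end Stmt14

/-- for a partition `P` of `{1,…,n}` (`n ≥ 3`), the class
`Δ_P = ∏_{{i,j} ∈ Edge(T)} Δ_{i,j} ∈ R(n)` is independent of the choice of the forest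
`T` consisting of one spanning tree per part of `P`. -/
theorem stmt_14 (n : ℕ) (hn : 3 ≤ n) (P : Finset (Finset (Fin n)))
    (hP : IsPartitionOf n P) (E₁ E₂ : Finset (Fin n × Fin n))
    (h₁ : IsSpanningForestFor P E₁) (h₂ : IsSpanningForestFor P E₂) :
    ∏ p ∈ E₁, delta p.1 p.2 = ∏ p ∈ E₂, delta p.1 p.2 := by
  obtain ⟨h11, h12, h13, h14⟩ := h₁
  obtain ⟨h21, h22, h23, h24⟩ := h₂
  rw [Stmt14.main E₁ h11 h12 h13, Stmt14.main E₂ h21 h22 h23]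
  exact Stmt14.canon_congr (fun a b => (h14 a b).trans ((h24 a b).symm))
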